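/- Let k > 1, θ > 0, d₁, d₂ > 0 satisfy d₁/d₂ > (√(k+1)−√2)⁴ / (4θk(√(2(k+1))−1)). With M* = (√(k+1)−√2)²/k and ℓₙ = n√((d₁+d₂)/M*), the quantity D_j(λ*) = θ(√(2(k+1))−1)/k − M* · d₂ j²/ℓₙ² + d₁ d₂ j⁴/ℓₙ⁴ is strictly positive for every real j > 0. -/

import Mathlib

/-- Under the diffusion-ratio condition, the determinant term
`D_j(λ*) = θ(√(2(k+1))−1)/k − M* d₂ j²/ℓₙ² + d₁d₂ j⁴/ℓₙ⁴` is positive for all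
real `j > 0`. -/
theorem stmt12 (d₁ d₂ θ k : ℝ) (hd₁ : 0 < d₁) (hd₂ : 0 < d₂) (hθ : 0 < θ)
    (hk : 1 < k)
    (hdd : d₁ / d₂ >
      (Real.sqrt (k + 1) - Real.sqrt 2) ^ 4 /
        (4 * θ * k * (Real.sqrt (2 * (k + 1)) - 1)))
    (n : ℕ) (hn : 1 ≤ n) :
    let Mstar := (Real.sqrt (k + 1) - Real.sqrt 2) ^ 2 / k
    let ln := (n : ℝ) * Real.sqrt ((d₁ + d₂) / Mstar)
    ∀ j : ℝ, 0 < j →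
      0 < θ * (Real.sqrt (2 * (k + 1)) - 1) / k - Mstar * d₂ * j ^ 2 / ln ^ 2 +
          d₁ * d₂ * j ^ 4 / ln ^ 4 := by
  intro Mstar ln j hj
  set s : ℝ := Real.sqrt (k + 1) - Real.sqrt 2 with hs_def
  set t : ℝ := Real.sqrt (2 * (k + 1)) - 1 with ht_def
  have hk0 : (0:ℝ) < k := by linarith
  have hs : 0 < s := by
    have : Real.sqrt 2 < Real.sqrt (k + 1) :=
      Real.sqrt_lt_sqrt (by norm_num) (by linarith)
    rw [hs_def]; linarith
  have ht : 0 < t := by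
    have : Real.sqrt 1 < Real.sqrt (2 * (k + 1)) :=
      Real.sqrt_lt_sqrt (by norm_num) (by linarith)
    rw [Real.sqrt_one] at this
    rw [ht_def]; linarith
  have hM : 0 < Mstar := by
    have : 0 < s ^ 2 := by positivity
    exact div_pos this hk0
  have hln : 0 < ln := by
    have h1 : 0 < (d₁ + d₂) / Mstar := by positivity
    have h2 : 0 < Real.sqrt ((d₁ + d₂) / Mstar) := Real.sqrt_pos.mpr h1
    have hn' : (0:ℝ) < n := by exact_mod_cast hn
    exact mul_pos hn' h2
  -- key inequality from hdd
  have hden : 0 < 4 * θ * k * t := by positivity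
  have hkey : s ^ 4 * d₂ < d₁ * (4 * θ * k * t) :=
    (div_lt_div_iff₀ hden hd₂).mp hdd
  set x : ℝ := j ^ 2 / ln ^ 2 with hx_def
  have hrw2 : Mstar * d₂ * j ^ 2 / ln ^ 2 = Mstar * d₂ * x := by
    rw [hx_def]; ring
  have hrw4 : d₁ * d₂ * j ^ 4 / ln ^ 4 = d₁ * d₂ * x ^ 2 := by
    rw [hx_def, div_pow]
    field_simp
  rw [hrw2, hrw4]
  have hMeq : Mstar = s ^ 2 / k := rfl
  rw [hMeq]
  have key : 0 < θ * t - s ^ 2 * d₂ * x + k * (d₁ * d₂ * x ^ 2) := by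
    nlinarith [sq_nonneg (2 * k * d₁ * d₂ * x - s ^ 2 * d₂),
      mul_lt_mul_of_pos_right hkey hd₂, mul_pos (mul_pos hk0 hd₁) hd₂]
  have : θ * t / k - s ^ 2 / k * d₂ * x + d₁ * d₂ * x ^ 2
      = (θ * t - s ^ 2 * d₂ * x + k * (d₁ * d₂ * x ^ 2)) / k := by
    field_simp
  rw [this]
  exact div_pos key hk0
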